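/- Let R be a nondegenerate rank n ring, i.e., a commutative unital ring whose additive group is ℤⁿ with nonzero discriminant, and let σ₁,…,σ_n be its n ring homomorphisms into ℂ. Define |x|² = (1/n)·Σᵢ |σᵢ(x)|² for x ∈ R. Then for every nonzero x ∈ R, one has |x| ≥ 1/√n. -/

import Mathlib

open scoped BigOperators

open Polynomial in
/-- Let `R` be a nondegenerate rank `n` ring (commutative ring whose additive group is `ℤⁿ`,
with nonzero discriminant), and let `σ 1, …, σ n` be its `n` ring homomorphisms into `ℂ`.
With `|x|² = (1/n) Σ |σᵢ x|²`, every nonzero `x ∈ R` satisfies `|x| ≥ 1/√n`. -/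
theorem lambda_zero_lower_bound {R : Type*} [CommRing R] (n : ℕ) (hn : 0 < n)
    (b : Module.Basis (Fin n) ℤ R)
    (hdisc : (Matrix.of fun i j : Fin n =>
        LinearMap.trace ℤ R (LinearMap.mulLeft ℤ (b i * b j))).det ≠ 0)
    (σ : Fin n → (R →+* ℂ))
    (hσinj : Function.Injective σ)
    (hσall : ∀ φ : R →+* ℂ, ∃ i, φ = σ i)
    (x : R) (hx : x ≠ 0) :
    (1 : ℝ) / Real.sqrt n ≤ Real.sqrt ((1 / n) * ∑ i, ‖σ i x‖ ^ 2) := by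
  classical
  -- expansion of σ along the basis
  have hσy : ∀ (i : Fin n) (y : R), σ i y = ∑ j, (b.repr y j : ℂ) * σ i (b j) := by
    intro i y
    conv_lhs => rw [← b.sum_repr y]
    rw [map_sum]
    refine Finset.sum_congr rfl fun j _ => ?_
    rw [map_zsmul, zsmul_eq_mul]
  set M : Matrix (Fin n) (Fin n) ℂ := Matrix.of fun i j => σ i (b j) with hM
  -- Dedekind: M has nonzero determinant
  have hdetM : M.det ≠ 0 := by
    rw [Ne, ← Matrix.exists_vecMul_eq_zero_iff]
    rintro ⟨v, hv, hvM⟩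
    have hmono : Function.Injective fun i : Fin n => (σ i : R →* ℂ) := by
      intro i j h
      exact hσinj (RingHom.ext fun r => DFunLike.congr_fun h r)
    have hli := (linearIndependent_monoidHom R ℂ).comp _ hmono
    refine hv (funext (Fintype.linearIndependent_iff.mp hli v ?_))
    funext y
    have : ∑ i, v i * σ i y = 0 := by
      calc ∑ i, v i * σ i y = ∑ i, v i * ∑ j, (b.repr y j : ℂ) * σ i (b j) := by
            simp_rw [← hσy]
        _ = ∑ j, (b.repr y j : ℂ) * ∑ i, v i * M i j := by
            simp_rw [Finset.mul_sum]
            rw [Finset.sum_comm]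
            refine Finset.sum_congr rfl fun j _ => Finset.sum_congr rfl fun i _ => by
              simp [hM]; ring
        _ = 0 := by
            refine Finset.sum_eq_zero fun j _ => ?_
            have := congrFun hvM j
            simp [Matrix.vecMul, dotProduct] at this
            simp [this]
    simpa using this
  set A : Matrix (Fin n) (Fin n) ℤ := Algebra.leftMulMatrix b x with hA
  set A' : Matrix (Fin n) (Fin n) ℂ := A.map (Int.cast : ℤ → ℂ) with hA'
  -- conjugation relation
  have hMA : M * A' = Matrix.diagonal (fun i => σ i x) * M := by
    ext i j
    have : σ i (x * b j) = ∑ k, ((A k j : ℤ) : ℂ) * σ i (b k) := by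
      rw [hσy i (x * b j)]
      refine Finset.sum_congr rfl fun k _ => by
        rw [hA, Algebra.leftMulMatrix_eq_repr_mul]
    rw [Matrix.diagonal_mul]
    rw [Matrix.mul_apply]
    simp only [hA', Matrix.map_apply, hM, Matrix.of_apply]
    rw [show ∑ k, (σ i (b k)) * ((A k j : ℤ) : ℂ) = σ i (x * b j) by
      rw [this]; exact Finset.sum_congr rfl fun k _ => mul_comm _ _]
    rw [map_mul]
  -- charpoly of A over ℂ factors
  have hchar : A'.charpoly = ∏ i, (X - C (σ i x)) := by
    set D : Matrix (Fin n) (Fin n) ℂ := Matrix.diagonal (fun i => σ i x) with hD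
    have hDchar : D.charpoly = ∏ i, (X - C (σ i x)) := by
      rw [Matrix.charpoly]
      rw [show D.charmatrix = Matrix.diagonal (fun i => (X : ℂ[X]) - C (σ i x)) from ?_]
      · rw [Matrix.det_diagonal]
      · ext i j
        by_cases h : i = j
        · subst h; simp [Matrix.charmatrix_apply, hD]
        · simp [Matrix.charmatrix_apply, hD, Matrix.diagonal_apply_ne _ h]
    have key : (C : ℂ →+* ℂ[X]).mapMatrix M * A'.charmatrix
        = D.charmatrix * (C : ℂ →+* ℂ[X]).mapMatrix M := by
      rw [Matrix.charmatrix, Matrix.charmatrix, mul_sub, sub_mul,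
        ← map_mul ((C : ℂ →+* ℂ[X]).mapMatrix), hMA, map_mul]
      congr 1
      exact (Matrix.scalar_commute (X : ℂ[X]) (fun r' => Commute.all _ _) _).symm
    have hdet := congrArg Matrix.det key
    rw [Matrix.det_mul, Matrix.det_mul, ← RingHom.map_det] at hdet
    have hCdet : (C : ℂ →+* ℂ[X]) M.det ≠ 0 := by
      simpa using hdetM
    have : A'.charmatrix.det = D.charmatrix.det := by
      apply mul_left_cancel₀ hCdet
      rw [hdet, mul_comm]
    rw [Matrix.charpoly, this, ← Matrix.charpoly, hDchar]
  have hpmap : A.charpoly.map (Int.castRingHom ℂ) = ∏ i, (X - C (σ i x)) := by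
    rw [← Matrix.charpoly_map]; exact hchar
  -- some σ i x is nonzero
  have hSne : ∃ i, σ i x ≠ 0 := by
    by_contra h
    push_neg at h
    have hD0 : Matrix.diagonal (fun i => σ i x) = (0 : Matrix (Fin n) (Fin n) ℂ) := by
      ext i j
      by_cases hij : i = j
      · subst hij; simp [h]
      · simp [Matrix.diagonal_apply_ne _ hij]
    rw [hD0, Matrix.zero_mul] at hMA
    have hA'0 : A' = 0 := by
      have h1 : M⁻¹ * (M * A') = A' := by
        rw [← Matrix.mul_assoc, Matrix.nonsing_inv_mul M (isUnit_iff_ne_zero.mpr hdetM),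
          Matrix.one_mul]
      rw [hMA, Matrix.mul_zero] at h1
      exact h1.symm
    have hA0 : A = 0 := by
      ext i j
      have h2 : ((A i j : ℤ) : ℂ) = 0 := by
        have := congrFun (congrFun hA'0 i) j
        simpa [hA', Matrix.map_apply] using this
      exact_mod_cast h2
    apply hx
    have hxb : ∀ j, x * b j = 0 := by
      intro j
      apply b.repr.map_eq_zero_iff.mp
      ext i
      have h3 : A i j = 0 := by rw [hA0]; rfl
      rw [hA, Algebra.leftMulMatrix_eq_repr_mul] at h3
      simpa using h3
    calc x = x * 1 := (mul_one x).symm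
      _ = x * ∑ j, b.repr 1 j • b j := by rw [b.sum_repr]
      _ = ∑ j, b.repr 1 j • (x * b j) := by
          rw [Finset.mul_sum]
          exact Finset.sum_congr rfl fun j _ => by rw [mul_smul_comm]
      _ = 0 := by simp [hxb]
  -- coefficient argument
  set S : Finset (Fin n) := Finset.univ.filter (fun i => σ i x ≠ 0) with hS
  set g : ℂ[X] := ∏ i ∈ S, (X - C (σ i x)) with hg
  set k : ℕ := (Finset.univ.filter (fun i => ¬ σ i x ≠ 0)).card with hk
  have hsplit : (∏ i, ((X : ℂ[X]) - C (σ i x))) = g * X ^ k := by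
    rw [← Finset.prod_filter_mul_prod_filter_not Finset.univ (fun i => σ i x ≠ 0)]
    congr 1
    rw [show ∏ i ∈ Finset.univ.filter (fun i => ¬ σ i x ≠ 0), ((X : ℂ[X]) - C (σ i x))
        = ∏ _i ∈ Finset.univ.filter (fun i => ¬ σ i x ≠ 0), (X : ℂ[X]) from
      Finset.prod_congr rfl fun i hi => by
        have := (Finset.mem_filter.mp hi).2
        push_neg at this
        simp [this]]
    rw [Finset.prod_const, hk]
  have h1 : ((A.charpoly.coeff k : ℤ) : ℂ) = g.coeff 0 := by
    have := congrArg (fun q => q.coeff k) hpmap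
    simp only [Polynomial.coeff_map, Int.coe_castRingHom] at this
    rw [this, hsplit]
    have := Polynomial.coeff_mul_X_pow g k 0
    rwa [zero_add] at this
  have hg0 : g.coeff 0 = ∏ i ∈ S, (-(σ i x)) := by
    rw [Polynomial.coeff_zero_eq_eval_zero, hg, Polynomial.eval_prod]
    exact Finset.prod_congr rfl fun i _ => by simp
  have hgne : g.coeff 0 ≠ 0 := by
    rw [hg0]
    exact Finset.prod_ne_zero_iff.mpr fun i hi =>
      neg_ne_zero.mpr (Finset.mem_filter.mp hi).2
  have hcne : A.charpoly.coeff k ≠ 0 := by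
    intro h
    apply hgne
    rw [← h1, h, Int.cast_zero]
  have hnormprod : (1 : ℝ) ≤ ∏ i ∈ S, ‖σ i x‖ := by
    calc (1 : ℝ) ≤ |((A.charpoly.coeff k : ℤ) : ℝ)| := by
          rw [← Int.cast_abs]
          exact_mod_cast Int.one_le_abs hcne
      _ = ‖((A.charpoly.coeff k : ℤ) : ℂ)‖ := (Complex.norm_intCast _).symm
      _ = ‖g.coeff 0‖ := by rw [h1]
      _ = ∏ i ∈ S, ‖σ i x‖ := by
          rw [hg0, norm_prod]
          exact Finset.prod_congr rfl fun i _ => norm_neg _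
  -- some embedding has norm at least 1
  have hexists : ∃ i, (1 : ℝ) ≤ ‖σ i x‖ := by
    by_contra h
    push_neg at h
    obtain ⟨i0, hi0⟩ := hSne
    have hi0S : i0 ∈ S := Finset.mem_filter.mpr ⟨Finset.mem_univ _, hi0⟩
    have herase : ∏ i ∈ S.erase i0, ‖σ i x‖ ≤ 1 :=
      Finset.prod_le_one (fun i _ => norm_nonneg _) (fun i _ => (h i).le)
    have hlt : ∏ i ∈ S, ‖σ i x‖ < 1 := by
      rw [← Finset.mul_prod_erase S _ hi0S]
      calc ‖σ i0 x‖ * ∏ i ∈ S.erase i0, ‖σ i x‖ ≤ ‖σ i0 x‖ * 1 :=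
            mul_le_mul_of_nonneg_left herase (norm_nonneg _)
        _ < 1 := by rw [mul_one]; exact h i0
    linarith
  obtain ⟨i0, hi0⟩ := hexists
  have hsum : (1 : ℝ) ≤ ∑ i, ‖σ i x‖ ^ 2 := by
    calc (1 : ℝ) ≤ ‖σ i0 x‖ ^ 2 := by nlinarith
      _ ≤ ∑ i, ‖σ i x‖ ^ 2 :=
        Finset.single_le_sum (f := fun i => ‖σ i x‖ ^ 2) (fun i _ => sq_nonneg _)
          (Finset.mem_univ i0)
  have hnpos : (0 : ℝ) < n := by exact_mod_cast hn
  have hfin : (1 : ℝ) / n ≤ (1 / n) * ∑ i, ‖σ i x‖ ^ 2 := by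
    have := mul_le_mul_of_nonneg_left hsum (le_of_lt (by positivity : (0:ℝ) < 1 / n))
    simpa using this
  calc (1 : ℝ) / Real.sqrt n = Real.sqrt (1 / n) := by
        rw [one_div, one_div, Real.sqrt_inv]
    _ ≤ _ := Real.sqrt_le_sqrt hfin
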